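/- A bounded-below complex L of projective modules over a commutative ring R is splittable (i.e., L is the direct sum of a split exact subcomplex and a subcomplex with zero differential) if and only if the homology module H_j(L) is projective for all j. -/

import Mathlib

open LinearMap Submodule in
private lemma splt_proj_of_isCompl {R M : Type*} [CommRing R] [AddCommGroup M] [Module R M]
    [Module.Projective R M] {p q : Submodule R M} (h : IsCompl p q) :
    Module.Projective R p :=
  Module.Projective.of_split p.subtype (p.projectionOnto q h) (by ext x; simp [Submodule.projectionOnto_apply_left])

open LinearMap Submodule in
private lemma splt_exists_proj {R M : Type*} [CommRing R] [AddCommGroup M] [Module R M]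
    (p : Submodule R M) (hp : Module.Projective R (M ⧸ p)) :
    ∃ f : M →ₗ[R] p, ∀ x : p, f (x : M) = x := by
  obtain ⟨σ, hσ⟩ := Module.projective_lifting_property p.mkQ LinearMap.id p.mkQ_surjective
  have hmem : ∀ x : M, x - σ (p.mkQ x) ∈ p := by
    intro x
    rw [← Submodule.Quotient.mk_eq_zero p]
    have : p.mkQ (x - σ (p.mkQ x)) = 0 := by
      rw [map_sub, ← LinearMap.comp_apply, hσ, LinearMap.id_apply, sub_self]
    simpa using this
  refine ⟨(LinearMap.id - σ ∘ₗ p.mkQ).codRestrict p (fun x => by simpa using hmem x), fun x => ?_⟩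
  apply Subtype.ext
  have hx0 : p.mkQ (x : M) = 0 := by
    simpa using (Submodule.Quotient.mk_eq_zero p).2 x.2
  simp [LinearMap.codRestrict_apply, hx0]



/- A bounded-below complex of projective modules
`⋯ → L (i+1) --d i--> L i → ⋯ → L 1 --d 0--> L 0`
is splittable (a direct sum of a split exact subcomplex `A` and a subcomplex `B` with zero
differential, where split exactness of `A` is witnessed by a contracting homotopy `s`
preserving `A`) if and only if all of its homology modules are projective. -/

/- A bounded-below complex of projective modules
`⋯ → L (i+1) --d i--> L i → ⋯ → L 1 --d 0--> L 0`
is splittable (a direct sum of a split exact subcomplex `A` and a subcomplex `B` with zero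
differential, where split exactness of `A` is witnessed by a contracting homotopy `s`
preserving `A`) if and only if all of its homology modules are projective. -/

theorem stmt_6 {R : Type*} [CommRing R] (L : ℕ → Type*)
    [∀ i, AddCommGroup (L i)] [∀ i, Module R (L i)] [∀ i, Module.Projective R (L i)]
    (d : ∀ i : ℕ, L (i + 1) →ₗ[R] L i)
    (hdd : ∀ i, d i ∘ₗ d (i + 1) = 0) :
    (∃ A B : ∀ i, Submodule R (L i),
      (∀ i, IsCompl (A i) (B i)) ∧
      (∀ i, ∀ x ∈ A (i + 1), d i x ∈ A i) ∧
      (∀ i, ∀ x ∈ B (i + 1), d i x = 0) ∧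
      ∃ s : ∀ i, L i →ₗ[R] L (i + 1),
        (∀ i, ∀ x ∈ A i, s i x ∈ A (i + 1)) ∧
        (∀ x ∈ A 0, d 0 (s 0 x) = x) ∧
        (∀ i, ∀ x ∈ A (i + 1), d (i + 1) (s (i + 1) x) + s i (d i x) = x)) ↔
    (Module.Projective R (L 0 ⧸ LinearMap.range (d 0)) ∧
      ∀ i, Module.Projective R
        (↥(LinearMap.ker (d i)) ⧸
          Submodule.comap (LinearMap.ker (d i)).subtype (LinearMap.range (d (i + 1))))) := by
  open LinearMap Submodule in
  constructor
  · rintro ⟨A, B, hcompl, hdA, hdB, s, hsA, hs0, hsi⟩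
    -- boundaries lie in A
    have hBd : ∀ i, LinearMap.range (d i) ≤ A i := by
      rintro i _ ⟨x, rfl⟩
      have hx : x ∈ A (i + 1) ⊔ B (i + 1) := by
        rw [(hcompl (i + 1)).sup_eq_top]; trivial
      obtain ⟨a, ha, b, hb, rfl⟩ := Submodule.mem_sup.1 hx
      rw [map_add, hdB i b hb, add_zero]
      exact hdA i a ha
    constructor
    · -- degree 0
      have h0 : LinearMap.range (d 0) = A 0 :=
        le_antisymm (hBd 0) (fun a ha => ⟨s 0 a, hs0 a ha⟩)
      rw [h0]
      haveI : Module.Projective R (B 0) := splt_proj_of_isCompl (hcompl 0).symm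
      exact Module.Projective.of_equiv (Submodule.quotientEquivOfIsCompl (A 0) (B 0) (hcompl 0)).symm
    · intro i
      set K := LinearMap.ker (d i) with hK
      set N := Submodule.comap K.subtype (LinearMap.range (d (i + 1))) with hN
      have hBK : B (i + 1) ≤ K := fun x hx => LinearMap.mem_ker.2 (hdB i x hx)
      set B' := Submodule.comap K.subtype (B (i + 1)) with hB'
      have hcompl' : IsCompl N B' := by
        constructor
        · rw [disjoint_def]
          rintro ⟨x, hxK⟩ hxN hxB'
          have hxA : x ∈ A (i + 1) := hBd (i + 1) (by simpa [hN] using hxN)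
          have hxB : x ∈ B (i + 1) := by simpa [hB'] using hxB'
          have : x = 0 := (Submodule.disjoint_def.1 (hcompl (i + 1)).disjoint) x hxA hxB
          exact Subtype.ext this
        · rw [codisjoint_iff_le_sup]
          rintro ⟨x, hxK⟩ -
          have hx : x ∈ A (i + 1) ⊔ B (i + 1) := by
            rw [(hcompl (i + 1)).sup_eq_top]; trivial
          obtain ⟨a, ha, b, hb, hab⟩ := Submodule.mem_sup.1 hx
          have hdb : d i b = 0 := hdB i b hb
          have hda : d i a = 0 := by
            have hdx : d i x = 0 := hxK
            have := congrArg (d i) hab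
            rw [map_add, hdb, add_zero, hdx] at this
            exact this
          have haK : a ∈ K := hda
          have haBd : a ∈ LinearMap.range (d (i + 1)) := by
            have := hsi i a ha
            rw [show d i a = 0 from hda, map_zero, add_zero] at this
            exact ⟨s (i + 1) a, this⟩
          refine Submodule.mem_sup.2 ⟨⟨a, haK⟩, by simpa [hN] using haBd,
            ⟨b, hBK hb⟩, by simpa [hB'] using hb, ?_⟩
          exact Subtype.ext hab
      haveI : Module.Projective R (B (i + 1)) := splt_proj_of_isCompl (hcompl (i + 1)).symm
      haveI : Module.Projective R B' :=
        Module.Projective.of_equiv (Submodule.comapSubtypeEquivOfLe hBK).symm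
      exact Module.Projective.of_equiv (Submodule.quotientEquivOfIsCompl N B' hcompl').symm
  · rintro ⟨h0, hH⟩
    have hle : ∀ i, LinearMap.range (d (i + 1)) ≤ LinearMap.ker (d i) := by
      rintro i _ ⟨y, rfl⟩
      exact LinearMap.mem_ker.2 (DFunLike.congr_fun (hdd i) y)
    -- sections of d onto its range, given projectivity of the range
    have hτex : ∀ i, Module.Projective R ↥(LinearMap.range (d i)) →
        ∃ τ : ↥(LinearMap.range (d i)) →ₗ[R] L (i + 1), ∀ b, d i (τ b) = (b : L i) := by
      intro i hp
      obtain ⟨τ, hτ⟩ := Module.projective_lifting_property (d i).rangeRestrict LinearMap.id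
        (LinearMap.surjective_rangeRestrict (d i))
      exact ⟨τ, fun b => congrArg Subtype.val (DFunLike.congr_fun hτ b)⟩
    -- projections onto the kernel, given such a section
    have qfex : ∀ i (τ : ↥(LinearMap.range (d i)) →ₗ[R] L (i + 1))
        (hτ : ∀ b, d i (τ b) = (b : L i)),
        ∃ qf : L (i + 1) →ₗ[R] ↥(LinearMap.ker (d i)),
          (∀ x, (qf x : L (i + 1)) = x - τ ((d i).rangeRestrict x)) ∧
          (∀ x (hx : x ∈ LinearMap.ker (d i)), qf x = ⟨x, hx⟩) := by
      intro i τ hτ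
      have hmem : ∀ x, x - τ ((d i).rangeRestrict x) ∈ LinearMap.ker (d i) := by
        intro x
        rw [LinearMap.mem_ker, map_sub, hτ]
        exact sub_self (d i x)
      refine ⟨(LinearMap.id - τ ∘ₗ (d i).rangeRestrict).codRestrict _ (fun x => hmem x),
        fun x => rfl, fun x hx => ?_⟩
      have hd0 : (d i).rangeRestrict x = 0 := by
        apply Subtype.ext
        simpa using hx
      apply Subtype.ext
      simp [LinearMap.codRestrict_apply, hd0]
    -- projectivity of the boundary modules, by induction
    have hproj : ∀ i, Module.Projective R ↥(LinearMap.range (d i)) := by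
      intro i
      induction i with
      | zero =>
        obtain ⟨f, hf⟩ := splt_exists_proj (LinearMap.range (d 0)) h0
        exact Module.Projective.of_split (LinearMap.range (d 0)).subtype f
          (by ext x; simpa using hf x)
      | succ i ih =>
        obtain ⟨τ, hτ⟩ := hτex i ih
        obtain ⟨qf, hqf1, hqf2⟩ := qfex i τ hτ
        haveI : Module.Projective R ↥(LinearMap.ker (d i)) :=
          Module.Projective.of_split (LinearMap.ker (d i)).subtype qf
            (by ext x; simpa using hqf2 x.1 x.2)
        obtain ⟨g, hg⟩ := splt_exists_proj
          (Submodule.comap (LinearMap.ker (d i)).subtype (LinearMap.range (d (i + 1)))) (hH i)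
        haveI : Module.Projective R
            ↥(Submodule.comap (LinearMap.ker (d i)).subtype (LinearMap.range (d (i + 1)))) :=
          Module.Projective.of_split
            (Submodule.comap (LinearMap.ker (d i)).subtype (LinearMap.range (d (i + 1)))).subtype g
            (by ext x; simpa using hg x)
        exact Module.Projective.of_equiv (Submodule.comapSubtypeEquivOfLe (hle i))
    -- choose all the data
    choose τ hτ using fun i => hτex i (hproj i)
    choose qf hqf1 hqf2 using fun i => qfex i (τ i) (hτ i)
    obtain ⟨f0, hf0⟩ := splt_exists_proj (LinearMap.range (d 0)) h0
    choose g hg using fun i => splt_exists_proj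
      (Submodule.comap (LinearMap.ker (d i)).subtype (LinearMap.range (d (i + 1)))) (hH i)
    -- the "boundary part" map G and the projection raw onto A
    set G : ∀ i, L (i + 1) →ₗ[R] L (i + 1) := fun i =>
      (LinearMap.ker (d i)).subtype ∘ₗ
        (Submodule.comap (LinearMap.ker (d i)).subtype (LinearMap.range (d (i + 1)))).subtype ∘ₗ
        g i ∘ₗ qf i with hGdef
    set raw : ∀ i, L (i + 1) →ₗ[R] L (i + 1) := fun i =>
      (τ i ∘ₗ (d i).rangeRestrict) + G i with hrawdef
    have hGval : ∀ i x, G i x = ((g i (qf i x) : ↥(LinearMap.ker (d i))) : L (i + 1)) :=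
      fun i x => rfl
    have hrawval : ∀ i x, raw i x = τ i ((d i).rangeRestrict x) + G i x := fun i x => rfl
    -- key pointwise facts
    have hGK : ∀ i x, d i (G i x) = 0 := by
      intro i x
      rw [hGval]
      exact (g i (qf i x) : ↥(LinearMap.ker (d i))).2
    have hGBd : ∀ i x, G i x ∈ LinearMap.range (d (i + 1)) := by
      intro i x
      rw [hGval]
      exact (g i (qf i x)).2
    have hrawτ : ∀ i (b : ↥(LinearMap.range (d i))), raw i (τ i b) = τ i b := by
      intro i b
      have h1 : (d i).rangeRestrict (τ i b) = b := Subtype.ext (hτ i b)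
      have h2 : qf i (τ i b) = 0 := by
        apply Subtype.ext
        rw [hqf1, h1]
        simp
      rw [hrawval, h1, hGval, h2, map_zero]
      simp
    have hGBdval : ∀ i x, x ∈ LinearMap.range (d (i + 1)) → G i x = x := by
      intro i x hx
      have hxK : x ∈ LinearMap.ker (d i) := hle i hx
      have h1 : qf i x = ⟨x, hxK⟩ := hqf2 i x hxK
      have h2 : (⟨x, hxK⟩ : ↥(LinearMap.ker (d i))) ∈
          Submodule.comap (LinearMap.ker (d i)).subtype (LinearMap.range (d (i + 1))) := by
        simpa using hx
      rw [hGval, h1, hg i ⟨⟨x, hxK⟩, h2⟩]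
    have hrawBd : ∀ i x, x ∈ LinearMap.range (d (i + 1)) → raw i x = x := by
      intro i x hx
      have hxK : x ∈ LinearMap.ker (d i) := hle i hx
      have hd0 : (d i).rangeRestrict x = 0 := Subtype.ext (by simpa using hxK)
      rw [hrawval, hd0, map_zero, hGBdval i x hx, zero_add]
    have hrawA : ∀ i, ∀ x ∈ LinearMap.range (τ i) ⊔ LinearMap.range (d (i + 1)), raw i x = x := by
      intro i x hx
      obtain ⟨a, ⟨b, rfl⟩, c, hc, rfl⟩ := Submodule.mem_sup.1 hx
      rw [map_add, hrawτ i b, hrawBd i c hc]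
    have hmemA : ∀ i x, raw i x ∈ LinearMap.range (τ i) ⊔ LinearMap.range (d (i + 1)) := by
      intro i x
      rw [hrawval]
      exact Submodule.add_mem _ (Submodule.mem_sup_left ⟨_, rfl⟩)
        (Submodule.mem_sup_right (hGBd i x))
    have hdraw : ∀ i x, d i (raw i x) = d i x := by
      intro i x
      rw [hrawval, map_add, hGK, add_zero, hτ]
      rfl
    -- the submodules
    refine ⟨(fun i => match i with
        | 0 => LinearMap.range (d 0)
        | (i + 1) => LinearMap.range (τ i) ⊔ LinearMap.range (d (i + 1))),
      (fun i => match i with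
        | 0 => LinearMap.ker f0
        | (i + 1) => LinearMap.ker (raw i)), ?_, ?_, ?_, ?_⟩
    · -- IsCompl
      intro i
      match i with
      | 0 => exact LinearMap.isCompl_of_proj hf0
      | (i + 1) =>
        have h := LinearMap.isCompl_of_proj
          (f := (raw i).codRestrict (LinearMap.range (τ i) ⊔ LinearMap.range (d (i + 1)))
            (hmemA i)) (fun x => Subtype.ext (hrawA i x x.2))
        rwa [LinearMap.ker_codRestrict] at h
    · -- d maps A into A
      intro i x hx
      match i with
      | 0 => exact ⟨x, rfl⟩
      | (i + 1) => exact Submodule.mem_sup_right ⟨x, rfl⟩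
    · -- d vanishes on B
      intro i x hx
      have h := hdraw i x
      rw [LinearMap.mem_ker.1 hx, map_zero] at h
      exact h.symm
    · -- the homotopy
      refine ⟨(fun i => match i with
          | 0 => τ 0 ∘ₗ f0
          | (i + 1) => τ (i + 1) ∘ₗ (G i).codRestrict (LinearMap.range (d (i + 1))) (hGBd i)),
        ?_, ?_, ?_⟩
      · intro i x hx
        match i with
        | 0 => exact Submodule.mem_sup_left ⟨_, rfl⟩
        | (i + 1) => exact Submodule.mem_sup_left ⟨_, rfl⟩
      · intro x hx
        have h1 : f0 x = ⟨x, hx⟩ := hf0 ⟨x, hx⟩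
        show d 0 (τ 0 (f0 x)) = x
        rw [h1, hτ]
      · intro i x hx
        match i with
        | 0 =>
          show d 1 (τ 1 ((G 0).codRestrict (LinearMap.range (d 1)) (hGBd 0) x))
              + τ 0 (f0 (d 0 x)) = x
          have h1 : d 1 (τ 1 ((G 0).codRestrict (LinearMap.range (d 1)) (hGBd 0) x)) = G 0 x := by
            rw [hτ]
            exact LinearMap.codRestrict_apply _ _ _
          have h2 : f0 (d 0 x) = (d 0).rangeRestrict x := by
            refine (hf0 ⟨d 0 x, ⟨x, rfl⟩⟩).trans ?_
            exact Subtype.ext rfl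
          rw [h1, h2]
          exact (add_comm _ _).trans (((hrawval 0 x).symm).trans (hrawA 0 x hx))
        | (j + 1) =>
          show d (j + 1 + 1) (τ (j + 1 + 1)
                ((G (j + 1)).codRestrict (LinearMap.range (d (j + 1 + 1))) (hGBd (j + 1)) x))
              + τ (j + 1) ((G j).codRestrict (LinearMap.range (d (j + 1))) (hGBd j) (d (j + 1) x))
              = x
          have h1 : d (j + 1 + 1) (τ (j + 1 + 1)
              ((G (j + 1)).codRestrict (LinearMap.range (d (j + 1 + 1))) (hGBd (j + 1)) x))
              = G (j + 1) x := by
            rw [hτ]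
            exact LinearMap.codRestrict_apply _ _ _
          have h2 : (G j).codRestrict (LinearMap.range (d (j + 1))) (hGBd j) (d (j + 1) x)
              = (d (j + 1)).rangeRestrict x := by
            apply Subtype.ext
            show G j (d (j + 1) x) = d (j + 1) x
            exact hGBdval j _ ⟨x, rfl⟩
          rw [h1, h2]
          exact (add_comm _ _).trans (((hrawval (j + 1) x).symm).trans (hrawA (j + 1) x hx))
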